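/- Let α ∈ [0, π/2) and let A be an n×n strictly accretive matrix whose numerical range lies in the sector S_α. Then the block matrix [[A, cos(α)·I],[cos(α)·I, A⁻¹]] is accretive. -/

import Mathlib

open MeasureTheory Matrix
open scoped ComplexOrder

/-- The "real part" (Hermitian part) of a complex matrix: `(A + Aᴴ)/2`. -/
noncomputable def mre {m : Type*} (A : Matrix m m ℂ) : Matrix m m ℂ :=
  (1/2 : ℂ) • (A + Aᴴ)

/-- A matrix is accretive if its Hermitian part is positive semidefinite. -/
def Accretive {m : Type*} [Fintype m] (A : Matrix m m ℂ) : Prop :=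
  (mre A).PosSemidef

/-- Principal fractional power `A ^ t` of a matrix whose spectrum avoids `(-∞, 0]`,
given (for `0 < t < 1`) by the standard integral formula
`A^t = (sin (tπ)/π) ∫₀^∞ s^(t-1) A (A + s I)⁻¹ ds`. -/
noncomputable def apow {m : Type*} [Fintype m] [DecidableEq m]
    (A : Matrix m m ℂ) (t : ℝ) : Matrix m m ℂ :=
  if t = 0 then 1 else if t = 1 then A else
    Matrix.of fun i j => ∫ s in Set.Ioi (0 : ℝ),
      (((Real.sin (t * Real.pi) / Real.pi) * s ^ (t - 1)) •
        (A * (A + (s : ℂ) • (1 : Matrix m m ℂ))⁻¹)) i j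

/-- The weighted geometric mean `A ♯ₜ B = A^(1/2) (A^(-1/2) B A^(-1/2))^t A^(1/2)`
of (strictly accretive) matrices. -/
noncomputable def gmean {m : Type*} [Fintype m] [DecidableEq m]
    (A : Matrix m m ℂ) (t : ℝ) (B : Matrix m m ℂ) : Matrix m m ℂ :=
  apow A (1/2) * apow ((apow A (1/2))⁻¹ * B * (apow A (1/2))⁻¹) t * apow A (1/2)

/-- `Matrix.PosSemidef.sqrt` as defined in the older Mathlib (removed since). -/
noncomputable def Matrix.PosSemidef.sqrt {n : Type*} [Fintype n] [DecidableEq n] {𝕜 : Type*}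
    [RCLike 𝕜] {A : Matrix n n 𝕜} (hA : A.PosSemidef) : Matrix n n 𝕜 :=
  hA.1.eigenvectorUnitary.1 * diagonal ((↑) ∘ (√·) ∘ hA.1.eigenvalues) *
  (star hA.1.eigenvectorUnitary : Matrix n n 𝕜)

/-- The absolute value `|X| = (Xᴴ X)^(1/2)` of a matrix. -/
noncomputable def absM {m : Type*} [Fintype m] [DecidableEq m]
    (X : Matrix m m ℂ) : Matrix m m ℂ :=
  (Matrix.posSemidef_conjTranspose_mul_self X).sqrt

/-- The `j`-th largest singular value of a complex matrix. -/
noncomputable def singVals {k : ℕ} (T : Matrix (Fin k) (Fin k) ℂ) (j : Fin k) : ℝ :=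
  Real.sqrt (((Matrix.posSemidef_conjTranspose_mul_self T).1.eigenvalues ∘
    Tuple.sort (Matrix.posSemidef_conjTranspose_mul_self T).1.eigenvalues) j.rev)

/-- The `j`-th largest eigenvalue of a Hermitian matrix (junk value `0` otherwise). -/
noncomputable def eigDesc {k : ℕ} (T : Matrix (Fin k) (Fin k) ℂ) (j : Fin k) : ℝ :=
  if h : T.IsHermitian then (h.eigenvalues ∘ Tuple.sort h.eigenvalues) j.rev else 0

/-- The numerical range of `A` lies in the sector
`S_α = {z : Re z ≥ 0, |Im z| ≤ tan α · Re z}`. -/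
def InSector {k : ℕ} (α : ℝ) (A : Matrix (Fin k) (Fin k) ℂ) : Prop :=
  ∀ x : EuclideanSpace ℂ (Fin k), ‖x‖ = 1 →
    0 ≤ (star (x : Fin k → ℂ) ⬝ᵥ A.mulVec (x : Fin k → ℂ)).re ∧
      |(star (x : Fin k → ℂ) ⬝ᵥ A.mulVec (x : Fin k → ℂ)).im| ≤
        Real.tan α * (star (x : Fin k → ℂ) ⬝ᵥ A.mulVec (x : Fin k → ℂ)).re

section Aux

variable {m : Type*} [Fintype m]

lemma star_dot_mulVec (M : Matrix m m ℂ) (x y : m → ℂ) :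
    star (star x ⬝ᵥ M *ᵥ y) = star y ⬝ᵥ Mᴴ *ᵥ x := by
  rw [star_dotProduct, star_star, star_mulVec, dotProduct_mulVec]

lemma herm_dot_conj {M : Matrix m m ℂ} (hM : M.IsHermitian) (x y : m → ℂ) :
    star y ⬝ᵥ M *ᵥ x = star (star x ⬝ᵥ M *ᵥ y) := by
  rw [star_dot_mulVec, hM.eq]

lemma mre_isHermitian (A : Matrix m m ℂ) : (mre A).IsHermitian := by
  unfold mre
  rw [IsHermitian, conjTranspose_smul, conjTranspose_add, conjTranspose_conjTranspose]
  rw [add_comm Aᴴ A]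
  congr 1
  simp [Complex.ext_iff]

lemma dot_mre (A : Matrix m m ℂ) (x : m → ℂ) :
    star x ⬝ᵥ (mre A) *ᵥ x = (((star x ⬝ᵥ A *ᵥ x).re : ℝ) : ℂ) := by
  rw [mre, smul_mulVec, add_mulVec, dotProduct_smul, dotProduct_add]
  rw [show star x ⬝ᵥ Aᴴ *ᵥ x = star (star x ⬝ᵥ A *ᵥ x) from (star_dot_mulVec A x x).symm]
  rw [Complex.star_def, Complex.add_conj, smul_eq_mul]
  push_cast
  ring

lemma dot_mre_re (A : Matrix m m ℂ) (x : m → ℂ) :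
    (star x ⬝ᵥ (mre A) *ᵥ x).re = (star x ⬝ᵥ A *ᵥ x).re := by
  rw [dot_mre, Complex.ofReal_re]

noncomputable def kim {m : Type*} (A : Matrix m m ℂ) : Matrix m m ℂ :=
  (-Complex.I/2 : ℂ) • (A - Aᴴ)

lemma kim_isHermitian (A : Matrix m m ℂ) : (kim A).IsHermitian := by
  unfold kim
  rw [IsHermitian, conjTranspose_smul, conjTranspose_sub, conjTranspose_conjTranspose]
  ext i j
  simp only [Matrix.smul_apply, Matrix.sub_apply, smul_eq_mul]
  rw [show star (-Complex.I/2 : ℂ) = Complex.I/2 by simp [Complex.ext_iff]]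
  ring

lemma dot_kim (A : Matrix m m ℂ) (x : m → ℂ) :
    star x ⬝ᵥ (kim A) *ᵥ x = (((star x ⬝ᵥ A *ᵥ x).im : ℝ) : ℂ) := by
  rw [kim, smul_mulVec, sub_mulVec, dotProduct_smul, dotProduct_sub]
  rw [show star x ⬝ᵥ Aᴴ *ᵥ x = star (star x ⬝ᵥ A *ᵥ x) from (star_dot_mulVec A x x).symm]
  rw [Complex.star_def, Complex.sub_conj, smul_eq_mul]
  push_cast
  ring_nf
  rw [Complex.I_sq]
  ring

lemma mre_add_kim (A : Matrix m m ℂ) : mre A + Complex.I • kim A = A := by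
  unfold mre kim
  ext i j
  simp only [Matrix.add_apply, Matrix.smul_apply, smul_eq_mul, conjTranspose_apply, Matrix.sub_apply, Matrix.add_apply]
  ring_nf
  rw [Complex.I_sq]
  ring


lemma expand_dot (N : Matrix m m ℂ) (x y : m → ℂ) :
    star (x + y) ⬝ᵥ N *ᵥ (x + y) =
      star x ⬝ᵥ N *ᵥ x + star y ⬝ᵥ N *ᵥ y + (star x ⬝ᵥ N *ᵥ y + star y ⬝ᵥ N *ᵥ x) := by
  simp only [star_add, add_dotProduct, mulVec_add, dotProduct_add]
  ring

lemma expand_dot_re {N : Matrix m m ℂ} (hN : N.IsHermitian) (x y : m → ℂ) :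
    (star (x + y) ⬝ᵥ N *ᵥ (x + y)).re =
      (star x ⬝ᵥ N *ᵥ x).re + (star y ⬝ᵥ N *ᵥ y).re + 2 * (star x ⬝ᵥ N *ᵥ y).re := by
  rw [expand_dot, herm_dot_conj hN y x]
  simp [Complex.add_re]
  ring

lemma smul_dot_smul (N : Matrix m m ℂ) (c d : ℂ) (x y : m → ℂ) :
    star (c • x) ⬝ᵥ N *ᵥ (d • y) = star c * d * (star x ⬝ᵥ N *ᵥ y) := by
  simp only [star_smul, smul_dotProduct, mulVec_smul, dotProduct_smul, smul_eq_mul]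
  ring

lemma amgm_aux {a b r : ℝ} (ha : 0 ≤ a) (hb : 0 ≤ b)
    (h : ∀ s : ℝ, 0 < s → r ≤ (s * a + b / s) / 2) : r ≤ Real.sqrt a * Real.sqrt b := by
  rcases ha.eq_or_lt with ha0 | ha0
  · have hr : r ≤ 0 := by
      by_contra hr
      push_neg at hr
      have hs : (0:ℝ) < b / r + 1 := by positivity
      have h2 := h _ hs
      have h3 : b / (b / r + 1) < r := by
        rw [div_lt_iff₀ hs]
        nlinarith [div_mul_cancel₀ b hr.ne']
      rw [← ha0] at h2
      nlinarith
    exact hr.trans (by positivity)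
  · rcases hb.eq_or_lt with hb0 | hb0
    · have hr : r ≤ 0 := by
        by_contra hr
        push_neg at hr
        have h2 := h (r / a) (div_pos hr ha0)
        rw [div_mul_cancel₀ _ ha0.ne', ← hb0] at h2
        simp at h2
        nlinarith
      exact hr.trans (by positivity)
    · have hs : (0:ℝ) < Real.sqrt b / Real.sqrt a := by positivity
      have h2 := h _ hs
      have e1 : Real.sqrt b / Real.sqrt a * a = Real.sqrt a * Real.sqrt b := by
        rw [div_mul_eq_mul_div]
        rw [eq_comm, mul_comm, eq_div_iff (by positivity)]
        nlinarith [Real.sq_sqrt ha, Real.sqrt_nonneg a, Real.sqrt_nonneg b]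
      have e2 : b / (Real.sqrt b / Real.sqrt a) = Real.sqrt a * Real.sqrt b := by
        rw [div_div_eq_mul_div, eq_comm, eq_div_iff (by positivity)]
        nlinarith [Real.sq_sqrt hb, Real.sqrt_nonneg a, Real.sqrt_nonneg b]
      rw [e1, e2] at h2
      linarith

lemma polar_re {M H : Matrix m m ℂ} (hM : M.IsHermitian) (hH : H.IsHermitian) {t : ℝ}
    (ht : 0 ≤ t) (hHnn : ∀ x, 0 ≤ (star x ⬝ᵥ H *ᵥ x).re)
    (hb : ∀ x, |(star x ⬝ᵥ M *ᵥ x).re| ≤ t * (star x ⬝ᵥ H *ᵥ x).re) (x y : m → ℂ) :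
    |(star x ⬝ᵥ M *ᵥ y).re| ≤
      t * (Real.sqrt ((star x ⬝ᵥ H *ᵥ x).re) * Real.sqrt ((star y ⬝ᵥ H *ᵥ y).re)) := by
  -- step A : fixed-scale bound
  have stepA : ∀ u v : m → ℂ, |(star u ⬝ᵥ M *ᵥ v).re| ≤
      (t * (star u ⬝ᵥ H *ᵥ u).re + t * (star v ⬝ᵥ H *ᵥ v).re) / 2 := by
    intro u v
    have e1 := expand_dot_re hM u v
    have e2 := expand_dot_re hM u (-v)
    have e3 := expand_dot_re hH u v
    have e4 := expand_dot_re hH u (-v)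
    have hnegv : ∀ (N : Matrix m m ℂ), star u ⬝ᵥ N *ᵥ (-v) = -(star u ⬝ᵥ N *ᵥ v) := by
      intro N; simp [mulVec_neg]
    have hnegvv : ∀ (N : Matrix m m ℂ),
        star (-v) ⬝ᵥ N *ᵥ (-v) = star v ⬝ᵥ N *ᵥ v := by
      intro N; simp [mulVec_neg]
    rw [hnegv, hnegvv] at e2 e4
    simp only [Complex.neg_re] at e2 e4
    have b1 := hb (u + v)
    have b2 := hb (u + -v)
    rw [abs_le] at b1 b2 ⊢
    rw [e1, e3] at b1
    rw [e2, e4] at b2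
    ring_nf at b1 b2
    constructor <;> nlinarith [b1.1, b1.2, b2.1, b2.2]
  -- step B : optimize scaling
  have key : ∀ s : ℝ, 0 < s → |(star x ⬝ᵥ M *ᵥ y).re| ≤
      (s * (t * (star x ⬝ᵥ H *ᵥ x).re) + t * (star y ⬝ᵥ H *ᵥ y).re / s) / 2 := by
    intro s hs
    have hs' : (0:ℝ) < Real.sqrt s := Real.sqrt_pos.2 hs
    have hA := stepA ((Real.sqrt s : ℂ) • x) (((Real.sqrt s)⁻¹ : ℂ) • y)
    rw [smul_dot_smul, smul_dot_smul, smul_dot_smul] at hA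
    simp only [Complex.star_def, Complex.conj_ofReal] at hA
    have c1 : ((Real.sqrt s : ℂ) * ((Real.sqrt s : ℂ))⁻¹) = 1 :=
      mul_inv_cancel₀ (by exact_mod_cast hs'.ne')
    have c1' : ((Real.sqrt s : ℂ))⁻¹ = ((Real.sqrt s)⁻¹ : ℝ) := by push_cast; ring
    rw [c1, one_mul] at hA
    rw [c1'] at hA
    simp only [Complex.conj_ofReal] at hA
    have c2 : ((Real.sqrt s : ℂ) * (Real.sqrt s) * (star x ⬝ᵥ H *ᵥ x)).re
        = s * (star x ⬝ᵥ H *ᵥ x).re := by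
      rw [← Complex.ofReal_mul, Real.mul_self_sqrt hs.le, Complex.re_ofReal_mul]
    have c3 : ((((Real.sqrt s)⁻¹ : ℝ) : ℂ) * (((Real.sqrt s)⁻¹ : ℝ) : ℂ) * (star y ⬝ᵥ H *ᵥ y)).re
        = (star y ⬝ᵥ H *ᵥ y).re / s := by
      rw [← Complex.ofReal_mul, ← mul_inv, Real.mul_self_sqrt hs.le, Complex.re_ofReal_mul]
      ring
    rw [c2, c3] at hA
    calc |(star x ⬝ᵥ M *ᵥ y).re| ≤ _ := hA
      _ = (s * (t * (star x ⬝ᵥ H *ᵥ x).re) + t * (star y ⬝ᵥ H *ᵥ y).re / s) / 2 := by ring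
  have := amgm_aux (r := |(star x ⬝ᵥ M *ᵥ y).re|) (a := t * (star x ⬝ᵥ H *ᵥ x).re) (b := t * (star y ⬝ᵥ H *ᵥ y).re)
    (mul_nonneg ht (hHnn x)) (mul_nonneg ht (hHnn y)) ?_
  · calc |(star x ⬝ᵥ M *ᵥ y).re| ≤ _ := this
      _ = t * (Real.sqrt ((star x ⬝ᵥ H *ᵥ x).re) * Real.sqrt ((star y ⬝ᵥ H *ᵥ y).re)) := by
        rw [Real.sqrt_mul ht, Real.sqrt_mul ht]
        rw [show Real.sqrt t * Real.sqrt ((star x ⬝ᵥ H *ᵥ x).re) *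
            (Real.sqrt t * Real.sqrt ((star y ⬝ᵥ H *ᵥ y).re)) =
            (Real.sqrt t * Real.sqrt t) * (Real.sqrt ((star x ⬝ᵥ H *ᵥ x).re) *
            Real.sqrt ((star y ⬝ᵥ H *ᵥ y).re)) from by ring, Real.mul_self_sqrt ht]
  · intro s hs
    calc |(star x ⬝ᵥ M *ᵥ y).re| ≤ _ := key s hs
      _ = (s * (t * (star x ⬝ᵥ H *ᵥ x).re) + t * (star y ⬝ᵥ H *ᵥ y).re / s) / 2 := by ring

lemma smul_dot_left (N : Matrix m m ℂ) (c : ℂ) (x y : m → ℂ) :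
    star (c • x) ⬝ᵥ N *ᵥ y = star c * (star x ⬝ᵥ N *ᵥ y) := by
  simp only [star_smul, smul_dotProduct, smul_eq_mul]

lemma polar_abs {M H : Matrix m m ℂ} (hM : M.IsHermitian) (hH : H.IsHermitian) {t : ℝ}
    (ht : 0 ≤ t) (hHnn : ∀ x, 0 ≤ (star x ⬝ᵥ H *ᵥ x).re)
    (hb : ∀ x, |(star x ⬝ᵥ M *ᵥ x).re| ≤ t * (star x ⬝ᵥ H *ᵥ x).re) (x y : m → ℂ) :
    ‖star x ⬝ᵥ M *ᵥ y‖ ≤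
      t * (Real.sqrt ((star x ⬝ᵥ H *ᵥ x).re) * Real.sqrt ((star y ⬝ᵥ H *ᵥ y).re)) := by
  set z := star x ⬝ᵥ M *ᵥ y with hzdef
  rcases eq_or_ne z 0 with hz | hz
  · rw [hz]
    simp only [norm_zero]
    positivity
  · have habs : (0:ℝ) < ‖z‖ := norm_pos_iff.mpr hz
    set c : ℂ := z / (‖z‖ : ℂ) with hcdef
    have hzc : (‖z‖ : ℂ) ≠ 0 := by exact_mod_cast habs.ne'
    have hc1 : star c * z = (‖z‖ : ℂ) := by
      rw [hcdef, Complex.star_def, map_div₀, Complex.conj_ofReal, div_mul_eq_mul_div,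
        mul_comm, Complex.mul_conj, Complex.normSq_eq_norm_sq]
      rw [div_eq_iff hzc]
      push_cast
      ring
    have hc2 : star c * c = 1 := by
      rw [hcdef, Complex.star_def, map_div₀, Complex.conj_ofReal, div_mul_div_comm,
        mul_comm (starRingEnd ℂ z) z, Complex.mul_conj, Complex.normSq_eq_norm_sq]
      rw [div_eq_one_iff_eq (by positivity)]
      push_cast
      ring
    have hp := polar_re hM hH ht hHnn hb (c • x) y
    rw [smul_dot_left, ← hzdef, hc1] at hp
    have hq : star (c • x) ⬝ᵥ H *ᵥ (c • x) = star x ⬝ᵥ H *ᵥ x := by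
      rw [smul_dot_smul, hc2, one_mul]
    rw [hq] at hp
    simpa using hp

lemma herm_dot_im_zero {M : Matrix m m ℂ} (hM : M.IsHermitian) (x : m → ℂ) :
    (star x ⬝ᵥ M *ᵥ x).im = 0 := by
  have h := star_dot_mulVec M x x
  rw [hM.eq] at h
  have := congrArg Complex.im h
  simp only [Complex.star_def, Complex.conj_im] at this
  linarith

lemma sector_cs [DecidableEq m] {A : Matrix m m ℂ} (hA : (mre A).PosDef) {t : ℝ} (ht : 0 ≤ t)
    (hsec : ∀ x : m → ℂ, |(star x ⬝ᵥ A *ᵥ x).im| ≤ t * (star x ⬝ᵥ A *ᵥ x).re) (u y : m → ℂ) :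
    ‖star u ⬝ᵥ A *ᵥ y‖ ≤ Real.sqrt (1 + t^2) *
      (Real.sqrt ((star u ⬝ᵥ (mre A) *ᵥ u).re) * Real.sqrt ((star y ⬝ᵥ (mre A) *ᵥ y).re)) := by
  set H := mre A with hHdef
  set K := kim A with hKdef
  have hHherm : H.IsHermitian := mre_isHermitian A
  have hKherm : K.IsHermitian := kim_isHermitian A
  have hHnn : ∀ x : m → ℂ, 0 ≤ (star x ⬝ᵥ H *ᵥ x).re := by
    intro x
    have h2 := hA.posSemidef.dotProduct_mulVec_nonneg x
    rw [Complex.le_def] at h2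
    simpa using h2.1
  have hKb : ∀ x : m → ℂ, |(star x ⬝ᵥ K *ᵥ x).re| ≤ t * (star x ⬝ᵥ H *ᵥ x).re := by
    intro x
    rw [hKdef, dot_kim, Complex.ofReal_re, hHdef, dot_mre_re]
    exact hsec x
  have hHb : ∀ x : m → ℂ, |(star x ⬝ᵥ H *ᵥ x).re| ≤ 1 * (star x ⬝ᵥ H *ᵥ x).re := by
    intro x
    rw [one_mul, abs_of_nonneg (hHnn x)]
  have hdet : IsUnit H.det := (Matrix.isUnit_iff_isUnit_det H).1 hA.isUnit
  set w : m → ℂ := H⁻¹ *ᵥ (K *ᵥ y) with hwdef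
  have hw : H *ᵥ w = K *ᵥ y := by
    rw [hwdef, mulVec_mulVec, Matrix.mul_nonsing_inv H hdet, one_mulVec]
  set z : m → ℂ := y + Complex.I • w with hzdef
  have hz : A *ᵥ y = H *ᵥ z := by
    conv_lhs => rw [← mre_add_kim A]
    rw [hzdef, add_mulVec, smul_mulVec, mulVec_add, mulVec_smul, hw, ← hHdef, ← hKdef]
  -- q_H z = q_H y + q_H w
  have hp : star y ⬝ᵥ H *ᵥ w = (((star y ⬝ᵥ A *ᵥ y).im : ℝ) : ℂ) := by
    rw [hw, hKdef, dot_kim]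
  have hp' : star w ⬝ᵥ H *ᵥ y = (((star y ⬝ᵥ A *ᵥ y).im : ℝ) : ℂ) := by
    rw [herm_dot_conj hHherm, hp, Complex.star_def, Complex.conj_ofReal]
  have hexp : star z ⬝ᵥ H *ᵥ z = star y ⬝ᵥ H *ᵥ y + star w ⬝ᵥ H *ᵥ w := by
    rw [hzdef]
    simp only [star_add, star_smul, add_dotProduct, smul_dotProduct, mulVec_add, mulVec_smul,
      dotProduct_add, dotProduct_smul, smul_eq_mul, Complex.star_def, Complex.conj_I]
    rw [hp, hp']
    ring_nf
    rw [Complex.I_sq]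
    ring
  -- bound on h w
  have hqw : star w ⬝ᵥ K *ᵥ y = star w ⬝ᵥ H *ᵥ w := by rw [hw]
  have habsw : ‖star w ⬝ᵥ K *ᵥ y‖ = (star w ⬝ᵥ H *ᵥ w).re := by
    rw [hqw]
    have h1 : star w ⬝ᵥ H *ᵥ w = (((star w ⬝ᵥ H *ᵥ w).re : ℝ) : ℂ) := by
      apply Complex.ext
      · simp
      · simp [herm_dot_im_zero hHherm]
    rw [h1, Complex.norm_real, Real.norm_eq_abs, abs_of_nonneg]
    · simp
    · simpa using hHnn w
  have hwb := polar_abs hKherm hHherm ht hHnn hKb w y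
  rw [habsw] at hwb
  have hwsq : (star w ⬝ᵥ H *ᵥ w).re ≤ t^2 * (star y ⬝ᵥ H *ᵥ y).re := by
    nlinarith [Real.sq_sqrt (hHnn w), Real.sq_sqrt (hHnn y), Real.sqrt_nonneg
      ((star w ⬝ᵥ H *ᵥ w).re), Real.sqrt_nonneg ((star y ⬝ᵥ H *ᵥ y).re),
      sq_nonneg (Real.sqrt ((star w ⬝ᵥ H *ᵥ w).re) - t * Real.sqrt ((star y ⬝ᵥ H *ᵥ y).re))]
  -- final chain
  have hmain := polar_abs hHherm hHherm zero_le_one hHnn hHb u z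
  rw [one_mul] at hmain
  have hzle : Real.sqrt ((star z ⬝ᵥ H *ᵥ z).re) ≤
      Real.sqrt (1 + t^2) * Real.sqrt ((star y ⬝ᵥ H *ᵥ y).re) := by
    rw [← Real.sqrt_mul (by positivity)]
    apply Real.sqrt_le_sqrt
    rw [hexp, Complex.add_re]
    nlinarith [hHnn y]
  calc ‖star u ⬝ᵥ A *ᵥ y‖ = ‖star u ⬝ᵥ H *ᵥ z‖ := by rw [hz]
    _ ≤ Real.sqrt ((star u ⬝ᵥ H *ᵥ u).re) * Real.sqrt ((star z ⬝ᵥ H *ᵥ z).re) := hmain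
    _ ≤ Real.sqrt ((star u ⬝ᵥ H *ᵥ u).re) *
        (Real.sqrt (1 + t^2) * Real.sqrt ((star y ⬝ᵥ H *ᵥ y).re)) := by
      apply mul_le_mul_of_nonneg_left hzle (Real.sqrt_nonneg _)
    _ = Real.sqrt (1 + t^2) * (Real.sqrt ((star u ⬝ᵥ H *ᵥ u).re) *
        Real.sqrt ((star y ⬝ᵥ H *ᵥ y).re)) := by ring

/-- The sector condition extends from unit vectors to all vectors. -/
lemma insector_all {n : ℕ} {α : ℝ} {A : Matrix (Fin n) (Fin n) ℂ}
    (hAsec : ∀ x : EuclideanSpace ℂ (Fin n), ‖x‖ = 1 →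
      0 ≤ (star (x : Fin n → ℂ) ⬝ᵥ A.mulVec (x : Fin n → ℂ)).re ∧
        |(star (x : Fin n → ℂ) ⬝ᵥ A.mulVec (x : Fin n → ℂ)).im| ≤
          Real.tan α * (star (x : Fin n → ℂ) ⬝ᵥ A.mulVec (x : Fin n → ℂ)).re)
    (x : Fin n → ℂ) :
    |(star x ⬝ᵥ A *ᵥ x).im| ≤ Real.tan α * (star x ⬝ᵥ A *ᵥ x).re := by
  by_cases hx : x = 0
  · subst hx; simp
  · set X : EuclideanSpace ℂ (Fin n) := WithLp.toLp 2 x with hXdef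
    have hX0 : X ≠ 0 := fun h => hx (by simpa [X] using congrArg WithLp.ofLp h)
    have hXnorm : (0:ℝ) < ‖X‖ := norm_pos_iff.2 hX0
    set c : ℝ := ‖X‖⁻¹ with hcdef
    have hc : 0 < c := by positivity
    have hY : ‖((c : ℂ) • X : EuclideanSpace ℂ (Fin n))‖ = 1 := by
      rw [norm_smul, Complex.norm_real, Real.norm_eq_abs, abs_of_nonneg hc.le, hcdef,
        inv_mul_cancel₀ hXnorm.ne']
    have h := hAsec ((c : ℂ) • X) hY
    have hcoe : ((((c : ℂ) • X : EuclideanSpace ℂ (Fin n))) : Fin n → ℂ) = (c : ℂ) • x := rfl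
    rw [hcoe] at h
    rw [smul_dot_smul, Complex.star_def, Complex.conj_ofReal, ← Complex.ofReal_mul] at h
    rw [Complex.re_ofReal_mul, Complex.im_ofReal_mul] at h
    obtain ⟨h1, h2⟩ := h
    rw [abs_mul, abs_of_nonneg (by positivity : (0:ℝ) ≤ c * c)] at h2
    have hcc : (0:ℝ) < c * c := by positivity
    rw [show Real.tan α * (c * c * (star x ⬝ᵥ A *ᵥ x).re) =
      c * c * (Real.tan α * (star x ⬝ᵥ A *ᵥ x).re) from by ring] at h2
    exact (mul_le_mul_iff_right₀ hcc).mp h2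

lemma accretive_isUnit [DecidableEq m] {A : Matrix m m ℂ} (hA : (mre A).PosDef) :
    IsUnit A := by
  rw [← Matrix.mulVec_injective_iff_isUnit]
  intro a b hab
  by_contra hne
  have hx : a - b ≠ 0 := sub_ne_zero.2 hne
  have h0 : A *ᵥ (a - b) = 0 := by rw [mulVec_sub, hab, sub_self]
  have hp := hA.dotProduct_mulVec_pos hx
  rw [Complex.lt_def] at hp
  have h1 := hp.1
  rw [Complex.zero_re] at h1
  rw [show (star (a - b) ⬝ᵥ mre A *ᵥ (a - b)).re = (star (a - b) ⬝ᵥ A *ᵥ (a - b)).re from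
    dot_mre_re A (a - b), h0] at h1
  simp at h1

theorem stmt2' {n : ℕ} (α : ℝ) (hα₀ : 0 ≤ α) (hα₁ : α < Real.pi / 2)
    (A : Matrix (Fin n) (Fin n) ℂ) (hA : (mre A).PosDef)
    (hAsec : ∀ x : EuclideanSpace ℂ (Fin n), ‖x‖ = 1 →
      0 ≤ (star (x : Fin n → ℂ) ⬝ᵥ A.mulVec (x : Fin n → ℂ)).re ∧
        |(star (x : Fin n → ℂ) ⬝ᵥ A.mulVec (x : Fin n → ℂ)).im| ≤
          Real.tan α * (star (x : Fin n → ℂ) ⬝ᵥ A.mulVec (x : Fin n → ℂ)).re) :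
    (mre (Matrix.fromBlocks A ((Real.cos α : ℂ) • (1 : Matrix (Fin n) (Fin n) ℂ))
      ((Real.cos α : ℂ) • (1 : Matrix (Fin n) (Fin n) ℂ)) A⁻¹)).PosSemidef := by
  have hcos : 0 < Real.cos α :=
    Real.cos_pos_of_mem_Ioo ⟨by linarith [Real.pi_pos], hα₁⟩
  set t := Real.tan α with htdef
  have ht : 0 ≤ t := Real.tan_nonneg_of_nonneg_of_le_pi_div_two hα₀ hα₁.le
  have hsec := insector_all hAsec
  have hAunit : IsUnit A := accretive_isUnit hA
  have hAdet : IsUnit A.det := (Matrix.isUnit_iff_isUnit_det A).1 hAunit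
  refine Matrix.PosSemidef.of_dotProduct_mulVec_nonneg ?_ ?_
  · exact mre_isHermitian _
  · intro x
    rw [dot_mre, Complex.zero_le_real]
    set u : Fin n → ℂ := x ∘ Sum.inl with hudef
    set v : Fin n → ℂ := x ∘ Sum.inr with hvdef
    have hxe : x = Sum.elim u v := by funext i; cases i <;> rfl
    set y : Fin n → ℂ := A⁻¹ *ᵥ v with hydef
    have hv : A *ᵥ y = v := by
      rw [hydef, mulVec_mulVec, Matrix.mul_nonsing_inv A hAdet, one_mulVec]
    have hq : star x ⬝ᵥ (Matrix.fromBlocks A ((Real.cos α : ℂ) • (1 : Matrix (Fin n) (Fin n) ℂ))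
        ((Real.cos α : ℂ) • (1 : Matrix (Fin n) (Fin n) ℂ)) A⁻¹) *ᵥ x =
        star u ⬝ᵥ A *ᵥ u + star v ⬝ᵥ A⁻¹ *ᵥ v +
          ((Real.cos α : ℂ) * (star u ⬝ᵥ v) + (Real.cos α : ℂ) * (star v ⬝ᵥ u)) := by
      rw [hxe]
      rw [fromBlocks_mulVec, Function.star_sumElim, sumElim_dotProduct_sumElim]
      simp only [Sum.elim_comp_inl, Sum.elim_comp_inr, smul_mulVec, one_mulVec,
        dotProduct_add, dotProduct_smul, smul_eq_mul]
      ring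
    rw [hq]
    have hs2 : star v ⬝ᵥ u = star (star u ⬝ᵥ v) := star_dotProduct _ _
    have hinv : star v ⬝ᵥ A⁻¹ *ᵥ v = star (star y ⬝ᵥ A *ᵥ y) := by
      conv_lhs => rw [show A⁻¹ *ᵥ v = y from rfl, ← hv]
      exact star_dotProduct _ _
    rw [hs2, hinv, ← hv]
    simp only [Complex.add_re, Complex.star_def, Complex.conj_re, Complex.re_ofReal_mul]
    have hu0 : 0 ≤ (star u ⬝ᵥ mre A *ᵥ u).re := by
      have h2 := hA.posSemidef.dotProduct_mulVec_nonneg u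
      rw [Complex.le_def] at h2
      simpa using h2.1
    have hy0 : 0 ≤ (star y ⬝ᵥ mre A *ᵥ y).re := by
      have h2 := hA.posSemidef.dotProduct_mulVec_nonneg y
      rw [Complex.le_def] at h2
      simpa using h2.1
    have hru : (star u ⬝ᵥ A *ᵥ u).re = (star u ⬝ᵥ mre A *ᵥ u).re := (dot_mre_re A u).symm
    have hry : (star y ⬝ᵥ A *ᵥ y).re = (star y ⬝ᵥ mre A *ᵥ y).re := (dot_mre_re A y).symm
    rw [hru, hry]
    have hcs := sector_cs hA ht hsec u y
    have hco1 : Real.sqrt (1 + t^2) * Real.cos α = 1 := by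
      rw [htdef, ← Real.inv_sqrt_one_add_tan_sq hcos]
      exact mul_inv_cancel₀ (by positivity)
    have e1 : Real.cos α * ‖star u ⬝ᵥ A *ᵥ y‖ ≤
        Real.sqrt ((star u ⬝ᵥ mre A *ᵥ u).re) * Real.sqrt ((star y ⬝ᵥ mre A *ᵥ y).re) := by
      calc Real.cos α * ‖star u ⬝ᵥ A *ᵥ y‖
          ≤ Real.cos α * (Real.sqrt (1 + t^2) * (Real.sqrt ((star u ⬝ᵥ mre A *ᵥ u).re) *
            Real.sqrt ((star y ⬝ᵥ mre A *ᵥ y).re))) := mul_le_mul_of_nonneg_left hcs hcos.le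
        _ = (Real.sqrt (1 + t^2) * Real.cos α) * (Real.sqrt ((star u ⬝ᵥ mre A *ᵥ u).re) *
            Real.sqrt ((star y ⬝ᵥ mre A *ᵥ y).re)) := by ring
        _ = _ := by rw [hco1, one_mul]
    have e2 : -(‖star u ⬝ᵥ A *ᵥ y‖) ≤ (star u ⬝ᵥ A *ᵥ y).re :=
      le_trans (neg_le_neg (Complex.abs_re_le_norm _)) (neg_abs_le _)
    have e3 : Real.cos α * -(‖star u ⬝ᵥ A *ᵥ y‖) ≤
        Real.cos α * (star u ⬝ᵥ A *ᵥ y).re := mul_le_mul_of_nonneg_left e2 hcos.le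
    nlinarith [e1, e3, sq_nonneg (Real.sqrt ((star u ⬝ᵥ mre A *ᵥ u).re) -
      Real.sqrt ((star y ⬝ᵥ mre A *ᵥ y).re)), Real.sq_sqrt hu0, Real.sq_sqrt hy0,
      Real.sqrt_nonneg ((star u ⬝ᵥ mre A *ᵥ u).re), Real.sqrt_nonneg ((star y ⬝ᵥ mre A *ᵥ y).re)]

end Aux

/-- If `A` is strictly accretive with numerical range in the sector `S_α`,
then `[[A, cos α · I], [cos α · I, A⁻¹]]` is accretive. -/
theorem stmt2 {n : ℕ} (α : ℝ) (hα₀ : 0 ≤ α) (hα₁ : α < Real.pi / 2)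
    (A : Matrix (Fin n) (Fin n) ℂ) (hA : (mre A).PosDef) (hAsec : InSector α A) :
    Accretive (Matrix.fromBlocks A ((Real.cos α : ℂ) • (1 : Matrix (Fin n) (Fin n) ℂ))
      ((Real.cos α : ℂ) • (1 : Matrix (Fin n) (Fin n) ℂ)) A⁻¹) :=
  stmt2' α hα₀ hα₁ A hA hAsec
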